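/- arXiv:0710.1544 — 3 statements merged into one kernel-verified Lean document; each statement's English description precedes it below -/
import Mathlib

section
/- Let A be a supercommutative ring, a an invertible even element, b an even element, β an odd element. Define the affine transformation G(x,ξ) = (a²x + a²b − a²βξ, aβ + aξ). Then for any three points tᵢ = (xᵢ,ξᵢ) (xᵢ even, ξᵢ odd, i = 1,2,3), with [tᵢ,tⱼ] = xⱼ − xᵢ − ξⱼξᵢ, one has [G(t₁),G(t₃)]·[t₁,t₂] = [G(t₁),G(t₂)]·[t₁,t₃]. In particular [G(tᵢ),G(tⱼ)] = a²[tᵢ,tⱼ]. -/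
/-- A supercommutative ring structure on a ring `A`: a choice of even and odd
elements such that even elements are central, odd elements pairwise
anticommute and square to zero, with the expected closure properties of the
`ℤ/2`-grading. -/
structure SuperComm (A : Type*) [Ring A] where
  Ev : A → Prop
  Od : A → Prop
  ev_central : ∀ a, Ev a → ∀ z, a * z = z * a
  od_anticomm : ∀ a b, Od a → Od b → a * b = -(b * a)
  od_sq : ∀ a, Od a → a * a = 0
  ev_add : ∀ a b, Ev a → Ev b → Ev (a + b)
  od_add : ∀ a b, Od a → Od b → Od (a + b)
  ev_neg : ∀ a, Ev a → Ev (-a)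
  od_neg : ∀ a, Od a → Od (-a)
  ev_one : Ev 1
  ev_mul_ev : ∀ a b, Ev a → Ev b → Ev (a * b)
  od_mul_od : ∀ a b, Od a → Od b → Ev (a * b)
  ev_mul_od : ∀ a b, Ev a → Od b → Od (a * b)

lemma super_key {A : Type*} [Ring A] (sc : SuperComm A)
    (a b β x ξ y η : A)
    (ha : sc.Ev a) (hβ : sc.Od β) (hξ : sc.Od ξ) (hη : sc.Od η) :
    (a^2*y + a^2*b - a^2*β*η) - (a^2*x + a^2*b - a^2*β*ξ)
      - (a*β + a*η) * (a*β + a*ξ) = a^2 * (y - x - η*ξ) := by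
  have key2 : ∀ u v : A, a*u*(a*v) = a^2*(u*v) := by
    intro u v
    have h := sc.ev_central a ha u
    calc a*u*(a*v) = a*(u*a)*v := by noncomm_ring
      _ = a*(a*u)*v := by rw [← h]
      _ = a^2*(u*v) := by noncomm_ring
  have e : (a*β + a*η) * (a*β + a*ξ)
      = a*β*(a*β) + (a*β*(a*ξ) + (a*η*(a*β) + a*η*(a*ξ))) := by noncomm_ring
  rw [e, key2, key2, key2, key2, sc.od_sq β hβ, sc.od_anticomm η β hη hβ]
  noncomm_ring

/-- the super affine transformation
`G(x,ξ) = (a²x + a²b - a²βξ, aβ + aξ)` (with `a` an invertible even element,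
`b` even, `β` odd) satisfies `[G(t₁),G(t₃)]·[t₁,t₂] = [G(t₁),G(t₂)]·[t₁,t₃]`,
and in particular `[G(tᵢ),G(tⱼ)] = a²·[tᵢ,tⱼ]` for all pairs, where
`[tᵢ,tⱼ] = xⱼ - xᵢ - ξⱼξᵢ`. -/
theorem super_affine_invariance
    {A : Type*} [Ring A] (sc : SuperComm A)
    (a b β x₁ ξ₁ x₂ ξ₂ x₃ ξ₃ : A)
    (ha : sc.Ev a) (haunit : IsUnit a) (hb : sc.Ev b) (hβ : sc.Od β)
    (hx₁ : sc.Ev x₁) (hξ₁ : sc.Od ξ₁)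
    (hx₂ : sc.Ev x₂) (hξ₂ : sc.Od ξ₂)
    (hx₃ : sc.Ev x₃) (hξ₃ : sc.Od ξ₃) :
    (((a^2*x₃ + a^2*b - a^2*β*ξ₃) - (a^2*x₁ + a^2*b - a^2*β*ξ₁)
        - (a*β + a*ξ₃) * (a*β + a*ξ₁)) * (x₂ - x₁ - ξ₂*ξ₁)
      = ((a^2*x₂ + a^2*b - a^2*β*ξ₂) - (a^2*x₁ + a^2*b - a^2*β*ξ₁)
        - (a*β + a*ξ₂) * (a*β + a*ξ₁)) * (x₃ - x₁ - ξ₃*ξ₁))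
    ∧ ((a^2*x₂ + a^2*b - a^2*β*ξ₂) - (a^2*x₁ + a^2*b - a^2*β*ξ₁)
        - (a*β + a*ξ₂) * (a*β + a*ξ₁) = a^2 * (x₂ - x₁ - ξ₂*ξ₁))
    ∧ ((a^2*x₃ + a^2*b - a^2*β*ξ₃) - (a^2*x₁ + a^2*b - a^2*β*ξ₁)
        - (a*β + a*ξ₃) * (a*β + a*ξ₁) = a^2 * (x₃ - x₁ - ξ₃*ξ₁))
    ∧ ((a^2*x₃ + a^2*b - a^2*β*ξ₃) - (a^2*x₂ + a^2*b - a^2*β*ξ₂)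
        - (a*β + a*ξ₃) * (a*β + a*ξ₂) = a^2 * (x₃ - x₂ - ξ₃*ξ₂)) := by
  have h12 := super_key sc a b β x₁ ξ₁ x₂ ξ₂ ha hβ hξ₁ hξ₂
  have h13 := super_key sc a b β x₁ ξ₁ x₃ ξ₃ ha hβ hξ₁ hξ₃
  have h23 := super_key sc a b β x₂ ξ₂ x₃ ξ₃ ha hβ hξ₂ hξ₃
  refine ⟨?_, h12, h13, h23⟩
  rw [h12, h13]
  have hev12 : sc.Ev (x₂ - x₁ - ξ₂*ξ₁) := by
    rw [sub_eq_add_neg, sub_eq_add_neg]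
    exact sc.ev_add _ _ (sc.ev_add _ _ hx₂ (sc.ev_neg _ hx₁))
      (sc.ev_neg _ (sc.od_mul_od _ _ hξ₂ hξ₁))
  have hc := sc.ev_central _ hev12 (x₃ - x₁ - ξ₃*ξ₁)
  rw [mul_assoc, ← hc, ← mul_assoc]
end

section
/- Let A be a supercommutative ring, and let a,b,c,d,e be even and α,β,γ,δ odd elements satisfying the orthosymplectic relations ad − bc − αβ = 1, e² + 2γδ = 1, αe − aδ + cγ = 0, βe − bδ + dγ = 0. For a point t = (x,ξ) (x even, ξ odd) with cx + d + δξ invertible, define ĥ(t) = ((ax+b+γξ)/(cx+d+δξ), (αx+β+eξ)/(cx+d+δξ)). Then for any two points t₁, t₂ with invertible denominators Dᵢ = cxᵢ + d + δξᵢ, one has [ĥ(t₁), ĥ(t₂)]·D₁·D₂ = [t₁,t₂], where [t₁,t₂] = x₂ − x₁ − ξ₂ξ₁. -/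
/-- The even Euclidean invariant `[t₁,t₂] = x₂ - x₁ - ξ₂ξ₁` of two points
`tᵢ = (xᵢ, ξᵢ)` of the supercircle. -/
def ebr {A : Type*} [Ring A] (t₁ t₂ : A × A) : A :=
  t₂.1 - t₁.1 - t₂.2 * t₁.2

/-- The homographic (superfractional-linear) action of an orthosymplectic
matrix with entries `a b c d e` (even) and `α β γ δ` (odd), where `Dinv` is an
inverse of the denominator `c·x + d + δ·ξ` at the point `t = (x, ξ)`. -/
def hmap {A : Type*} [Ring A] (a b e α β γ : A) (Dinv : A) (t : A × A) : A × A :=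
  ((a * t.1 + b + γ * t.2) * Dinv, (α * t.1 + β + e * t.2) * Dinv)

/-- transformation law of the even Euclidean invariant under an
orthosymplectic homography `ĥ` of `S^{1|1}`:
`[ĥ(t₁),ĥ(t₂)]·D₁·D₂ = [t₁,t₂]` where `Dᵢ = c·xᵢ + d + δ·ξᵢ` is invertible. -/
theorem spo_homography_euclidean_transformation
    {A : Type*} [Ring A] (sc : SuperComm A)
    (a b c d e α β γ δ : A)
    (ha : sc.Ev a) (hb : sc.Ev b) (hc : sc.Ev c) (hd : sc.Ev d) (he : sc.Ev e)
    (hα : sc.Od α) (hβ : sc.Od β) (hγ : sc.Od γ) (hδ : sc.Od δ)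
    (rel₁ : a * d - b * c - α * β = 1)
    (rel₂ : e * e + 2 * (γ * δ) = 1)
    (rel₃ : α * e - a * δ + c * γ = 0)
    (rel₄ : β * e - b * δ + d * γ = 0)
    (t₁ t₂ : A × A)
    (hx₁ : sc.Ev t₁.1) (hξ₁ : sc.Od t₁.2)
    (hx₂ : sc.Ev t₂.1) (hξ₂ : sc.Od t₂.2)
    (D₁inv D₂inv : A)
    (hD₁ : (c * t₁.1 + d + δ * t₁.2) * D₁inv = 1
         ∧ D₁inv * (c * t₁.1 + d + δ * t₁.2) = 1)
    (hD₂ : (c * t₂.1 + d + δ * t₂.2) * D₂inv = 1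
         ∧ D₂inv * (c * t₂.1 + d + δ * t₂.2) = 1) :
    ebr (hmap a b e α β γ D₁inv t₁) (hmap a b e α β γ D₂inv t₂)
        * (c * t₁.1 + d + δ * t₁.2) * (c * t₂.1 + d + δ * t₂.2)
      = ebr t₁ t₂ := by
  obtain ⟨x₁, ξ₁⟩ := t₁
  obtain ⟨x₂, ξ₂⟩ := t₂
  simp only [ebr, hmap] at hx₁ hξ₁ hx₂ hξ₂ hD₁ hD₂ ⊢
  -- helpers
  have cen : ∀ u, sc.Ev u → ∀ z w, z * (u * w) = u * (z * w) := by
    intro u hu z w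
    rw [← mul_assoc, ← sc.ev_central u hu z, mul_assoc]
  have osw : ∀ u v, sc.Od u → sc.Od v → ∀ w, u * (v * w) = -(v * (u * w)) := by
    intro u v hu hv w
    rw [← mul_assoc, sc.od_anticomm u v hu hv, neg_mul, mul_assoc]
  have hevD₁ : sc.Ev (c * x₁ + d + δ * ξ₁) :=
    sc.ev_add _ _ (sc.ev_add _ _ (sc.ev_mul_ev _ _ hc hx₁) hd) (sc.od_mul_od _ _ hδ hξ₁)
  have hevD₂ : sc.Ev (c * x₂ + d + δ * ξ₂) :=
    sc.ev_add _ _ (sc.ev_add _ _ (sc.ev_mul_ev _ _ hc hx₂) hd) (sc.od_mul_od _ _ hδ hξ₂)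
  have hc₁ : ∀ z, D₁inv * z = z * D₁inv := by
    intro z
    calc D₁inv * z = D₁inv * z * ((c * x₁ + d + δ * ξ₁) * D₁inv) := by rw [hD₁.1, mul_one]
      _ = D₁inv * ((z * (c * x₁ + d + δ * ξ₁)) * D₁inv) := by noncomm_ring
      _ = D₁inv * (((c * x₁ + d + δ * ξ₁) * z) * D₁inv) := by
          rw [← sc.ev_central _ hevD₁ z]
      _ = (D₁inv * (c * x₁ + d + δ * ξ₁)) * (z * D₁inv) := by noncomm_ring
      _ = z * D₁inv := by rw [hD₁.2, one_mul]
  have hc₂ : ∀ z, D₂inv * z = z * D₂inv := by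
    intro z
    calc D₂inv * z = D₂inv * z * ((c * x₂ + d + δ * ξ₂) * D₂inv) := by rw [hD₂.1, mul_one]
      _ = D₂inv * ((z * (c * x₂ + d + δ * ξ₂)) * D₂inv) := by noncomm_ring
      _ = D₂inv * (((c * x₂ + d + δ * ξ₂) * z) * D₂inv) := by
          rw [← sc.ev_central _ hevD₂ z]
      _ = (D₂inv * (c * x₂ + d + δ * ξ₂)) * (z * D₂inv) := by noncomm_ring
      _ = z * D₂inv := by rw [hD₂.2, one_mul]
  -- monomial normalizations
  have m1 : a * x₂ * (c * x₁) = a * (c * (x₁ * x₂)) := by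
    rw [mul_assoc, cen c hc x₂ x₁, sc.ev_central x₂ hx₂ x₁]
  have m1' : a * x₁ * (c * x₂) = a * (c * (x₁ * x₂)) := by
    rw [mul_assoc, cen c hc x₁ x₂]
  have m2 : a * x₂ * d = a * (d * x₂) := by
    rw [mul_assoc, sc.ev_central x₂ hx₂ d]
  have m2' : a * x₁ * d = a * (d * x₁) := by
    rw [mul_assoc, sc.ev_central x₁ hx₁ d]
  have m3 : a * x₂ * (δ * ξ₁) = x₂ * (a * (δ * ξ₁)) := by
    rw [sc.ev_central a ha x₂, mul_assoc]
  have m3' : a * x₁ * (δ * ξ₂) = x₁ * (a * (δ * ξ₂)) := by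
    rw [sc.ev_central a ha x₁, mul_assoc]
  have m7 : γ * ξ₂ * (c * x₁) = x₁ * (c * (γ * ξ₂)) := by
    rw [mul_assoc, cen c hc ξ₂ x₁, ← sc.ev_central x₁ hx₁ ξ₂, cen x₁ hx₁ c ξ₂,
      cen x₁ hx₁ γ (c * ξ₂), cen c hc γ ξ₂]
  have m7' : γ * ξ₁ * (c * x₂) = x₂ * (c * (γ * ξ₁)) := by
    rw [mul_assoc, cen c hc ξ₁ x₂, ← sc.ev_central x₂ hx₂ ξ₁, cen x₂ hx₂ c ξ₁,
      cen x₂ hx₂ γ (c * ξ₁), cen c hc γ ξ₁]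
  have m8 : γ * ξ₂ * d = d * (γ * ξ₂) := by
    rw [mul_assoc, ← sc.ev_central d hd ξ₂, cen d hd γ ξ₂]
  have m8' : γ * ξ₁ * d = d * (γ * ξ₁) := by
    rw [mul_assoc, ← sc.ev_central d hd ξ₁, cen d hd γ ξ₁]
  have m9 : γ * ξ₂ * (δ * ξ₁) = -(γ * (δ * (ξ₂ * ξ₁))) := by
    rw [mul_assoc, osw ξ₂ δ hξ₂ hδ ξ₁, mul_neg]
  have m9' : γ * ξ₁ * (δ * ξ₂) = γ * (δ * (ξ₂ * ξ₁)) := by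
    rw [mul_assoc, osw ξ₁ δ hξ₁ hδ ξ₂, mul_neg, sc.od_anticomm ξ₁ ξ₂ hξ₁ hξ₂,
      mul_neg, mul_neg, neg_neg]
  have m10 : α * x₂ * (α * x₁) = 0 := by
    rw [← sc.ev_central x₂ hx₂ α, mul_assoc, ← mul_assoc α α x₁, sc.od_sq α hα,
      zero_mul, mul_zero]
  have m11 : α * x₂ * β = α * (β * x₂) := by
    rw [mul_assoc, sc.ev_central x₂ hx₂ β]
  have m12 : α * x₂ * (e * ξ₁) = x₂ * (α * (e * ξ₁)) := by
    rw [← sc.ev_central x₂ hx₂ α, mul_assoc]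
  have m13 : β * (α * x₁) = -(α * (β * x₁)) := osw β α hβ hα x₁
  have m14 : β * β = 0 := sc.od_sq β hβ
  have m16 : e * ξ₂ * (α * x₁) = -(x₁ * (α * (e * ξ₂))) := by
    rw [mul_assoc, osw ξ₂ α hξ₂ hα x₁, mul_neg, ← sc.ev_central x₁ hx₁ ξ₂,
      cen x₁ hx₁ α ξ₂, cen x₁ hx₁ e (α * ξ₂), ← cen e he α ξ₂]
  have m17 : e * ξ₂ * β = -(β * (e * ξ₂)) := by
    rw [mul_assoc, sc.od_anticomm ξ₂ β hξ₂ hβ, mul_neg, ← cen e he β ξ₂]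
  have m18 : e * ξ₂ * (e * ξ₁) = e * (e * (ξ₂ * ξ₁)) := by
    rw [mul_assoc, cen e he ξ₂ ξ₁]
  -- the key algebraic identity
  have key : (a * x₂ + b + γ * ξ₂) * (c * x₁ + d + δ * ξ₁)
      - (a * x₁ + b + γ * ξ₁) * (c * x₂ + d + δ * ξ₂)
      - (α * x₂ + β + e * ξ₂) * (α * x₁ + β + e * ξ₁)
      = x₂ - x₁ - ξ₂ * ξ₁ := by
    calc (a * x₂ + b + γ * ξ₂) * (c * x₁ + d + δ * ξ₁)
        - (a * x₁ + b + γ * ξ₁) * (c * x₂ + d + δ * ξ₂)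
        - (α * x₂ + β + e * ξ₂) * (α * x₁ + β + e * ξ₁)
        = a * x₂ * (c * x₁) + a * x₂ * d + a * x₂ * (δ * ξ₁)
          + b * (c * x₁) + b * d + b * (δ * ξ₁)
          + γ * ξ₂ * (c * x₁) + γ * ξ₂ * d + γ * ξ₂ * (δ * ξ₁)
          - a * x₁ * (c * x₂) - a * x₁ * d - a * x₁ * (δ * ξ₂)
          - b * (c * x₂) - b * d - b * (δ * ξ₂)
          - γ * ξ₁ * (c * x₂) - γ * ξ₁ * d - γ * ξ₁ * (δ * ξ₂)
          - α * x₂ * (α * x₁) - α * x₂ * β - α * x₂ * (e * ξ₁)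
          - β * (α * x₁) - β * β - β * (e * ξ₁)
          - e * ξ₂ * (α * x₁) - e * ξ₂ * β - e * ξ₂ * (e * ξ₁) := by noncomm_ring
      _ = (a * d - b * c - α * β) * (x₂ - x₁)
          - x₂ * ((α * e - a * δ + c * γ) * ξ₁)
          + x₁ * ((α * e - a * δ + c * γ) * ξ₂)
          - (β * e - b * δ + d * γ) * ξ₁
          + (β * e - b * δ + d * γ) * ξ₂
          - (e * e + 2 * (γ * δ)) * (ξ₂ * ξ₁) := by
          rw [m1, m1', m2, m2', m3, m3', m7, m7', m8, m8', m9, m9', m10, m11, m12,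
            m13, m14, m16, m17, m18]
          noncomm_ring
      _ = x₂ - x₁ - ξ₂ * ξ₁ := by
          rw [rel₁, rel₂, rel₃, rel₄]
          noncomm_ring
  -- reduce the goal to the key identity
  have reduce : ((a * x₂ + b + γ * ξ₂) * D₂inv - (a * x₁ + b + γ * ξ₁) * D₁inv
        - (α * x₂ + β + e * ξ₂) * D₂inv * ((α * x₁ + β + e * ξ₁) * D₁inv))
        * (c * x₁ + d + δ * ξ₁) * (c * x₂ + d + δ * ξ₂)
      = (a * x₂ + b + γ * ξ₂) * (c * x₁ + d + δ * ξ₁)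
        - (a * x₁ + b + γ * ξ₁) * (c * x₂ + d + δ * ξ₂)
        - (α * x₂ + β + e * ξ₂) * (α * x₁ + β + e * ξ₁) := by
    have t1 : (a * x₂ + b + γ * ξ₂) * D₂inv * (c * x₁ + d + δ * ξ₁) * (c * x₂ + d + δ * ξ₂)
        = (a * x₂ + b + γ * ξ₂) * (c * x₁ + d + δ * ξ₁) := by
      rw [mul_assoc ((a * x₂ + b + γ * ξ₂) * D₂inv), mul_assoc, hc₂, mul_assoc,
        hD₂.1, mul_one]
    have t2 : (a * x₁ + b + γ * ξ₁) * D₁inv * (c * x₁ + d + δ * ξ₁) * (c * x₂ + d + δ * ξ₂)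
        = (a * x₁ + b + γ * ξ₁) * (c * x₂ + d + δ * ξ₂) := by
      rw [mul_assoc (a * x₁ + b + γ * ξ₁), hD₁.2, mul_one]
    have t3 : (α * x₂ + β + e * ξ₂) * D₂inv * ((α * x₁ + β + e * ξ₁) * D₁inv)
          * (c * x₁ + d + δ * ξ₁) * (c * x₂ + d + δ * ξ₂)
        = (α * x₂ + β + e * ξ₂) * (α * x₁ + β + e * ξ₁) := by
      calc (α * x₂ + β + e * ξ₂) * D₂inv * ((α * x₁ + β + e * ξ₁) * D₁inv)
            * (c * x₁ + d + δ * ξ₁) * (c * x₂ + d + δ * ξ₂)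
          = (α * x₂ + β + e * ξ₂) * (D₂inv * (α * x₁ + β + e * ξ₁))
            * (D₁inv * (c * x₁ + d + δ * ξ₁)) * (c * x₂ + d + δ * ξ₂) := by
            noncomm_ring
        _ = (α * x₂ + β + e * ξ₂) * ((α * x₁ + β + e * ξ₁) * D₂inv)
            * (c * x₂ + d + δ * ξ₂) := by
            rw [hD₁.2, mul_one, hc₂ (α * x₁ + β + e * ξ₁)]
        _ = (α * x₂ + β + e * ξ₂) * (α * x₁ + β + e * ξ₁)
            * (D₂inv * (c * x₂ + d + δ * ξ₂)) := by noncomm_ring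
        _ = (α * x₂ + β + e * ξ₂) * (α * x₁ + β + e * ξ₁) := by rw [hD₂.2, mul_one]
    rw [sub_mul, sub_mul, sub_mul, sub_mul, t1, t2, t3]
  exact reduce.trans key
end

section
/- With the same hypotheses as the transformation law for homographies (orthosymplectic relations, four points t₁,…,t₄ with invertible denominators Dᵢ = cxᵢ + d + δξᵢ), the even cross-ratio is invariant: [ĥ(t₁),ĥ(t₃)]·[ĥ(t₂),ĥ(t₄)]·[t₂,t₃]·[t₁,t₄] = [ĥ(t₂),ĥ(t₃)]·[ĥ(t₁),ĥ(t₄)]·[t₁,t₃]·[t₂,t₄]. -/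
theorem key {A : Type*} [Ring A] (sc : SuperComm A)
    (a b c d e x y α β γ δ ξ η : A)
    (ha : sc.Ev a) (hb : sc.Ev b) (hc : sc.Ev c) (hd : sc.Ev d) (he : sc.Ev e)
    (hx : sc.Ev x) (hy : sc.Ev y)
    (hα : sc.Od α) (hβ : sc.Od β) (hγ : sc.Od γ) (hδ : sc.Od δ)
    (hξ : sc.Od ξ) (hη : sc.Od η) :
    (a*y + b + γ*η) * (c*x + d + δ*ξ) - (a*x + b + γ*ξ) * (c*y + d + δ*η)
      - (α*y + β + e*η) * (α*x + β + e*ξ)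
    = (a*d - b*c - α*β) * (y - x) + (a*δ - e*α - c*γ) * (y*ξ - x*η)
      + (b*δ - e*β - d*γ) * (ξ - η) - (e*e + 2*(γ*δ)) * (η*ξ) := by
  have cm1_0 : b * a = a * b := sc.ev_central b hb a
  have lc1_0 : ∀ z : A, b * (a * z) = a * (b * z) := fun z => by rw [← mul_assoc, sc.ev_central b hb a, mul_assoc]
  have cm2_0 : c * a = a * c := sc.ev_central c hc a
  have lc2_0 : ∀ z : A, c * (a * z) = a * (c * z) := fun z => by rw [← mul_assoc, sc.ev_central c hc a, mul_assoc]
  have cm3_0 : d * a = a * d := sc.ev_central d hd a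
  have lc3_0 : ∀ z : A, d * (a * z) = a * (d * z) := fun z => by rw [← mul_assoc, sc.ev_central d hd a, mul_assoc]
  have cm4_0 : e * a = a * e := sc.ev_central e he a
  have lc4_0 : ∀ z : A, e * (a * z) = a * (e * z) := fun z => by rw [← mul_assoc, sc.ev_central e he a, mul_assoc]
  have cm5_0 : x * a = a * x := sc.ev_central x hx a
  have lc5_0 : ∀ z : A, x * (a * z) = a * (x * z) := fun z => by rw [← mul_assoc, sc.ev_central x hx a, mul_assoc]
  have cm6_0 : y * a = a * y := sc.ev_central y hy a
  have lc6_0 : ∀ z : A, y * (a * z) = a * (y * z) := fun z => by rw [← mul_assoc, sc.ev_central y hy a, mul_assoc]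
  have cm7_0 : α * a = a * α := (sc.ev_central a ha α).symm
  have lc7_0 : ∀ z : A, α * (a * z) = a * (α * z) := fun z => by rw [← mul_assoc, (sc.ev_central a ha α).symm, mul_assoc]
  have cm8_0 : β * a = a * β := (sc.ev_central a ha β).symm
  have lc8_0 : ∀ z : A, β * (a * z) = a * (β * z) := fun z => by rw [← mul_assoc, (sc.ev_central a ha β).symm, mul_assoc]
  have cm9_0 : γ * a = a * γ := (sc.ev_central a ha γ).symm
  have lc9_0 : ∀ z : A, γ * (a * z) = a * (γ * z) := fun z => by rw [← mul_assoc, (sc.ev_central a ha γ).symm, mul_assoc]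
  have cm10_0 : δ * a = a * δ := (sc.ev_central a ha δ).symm
  have lc10_0 : ∀ z : A, δ * (a * z) = a * (δ * z) := fun z => by rw [← mul_assoc, (sc.ev_central a ha δ).symm, mul_assoc]
  have cm11_0 : ξ * a = a * ξ := (sc.ev_central a ha ξ).symm
  have lc11_0 : ∀ z : A, ξ * (a * z) = a * (ξ * z) := fun z => by rw [← mul_assoc, (sc.ev_central a ha ξ).symm, mul_assoc]
  have cm12_0 : η * a = a * η := (sc.ev_central a ha η).symm
  have lc12_0 : ∀ z : A, η * (a * z) = a * (η * z) := fun z => by rw [← mul_assoc, (sc.ev_central a ha η).symm, mul_assoc]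
  have cm2_1 : c * b = b * c := sc.ev_central c hc b
  have lc2_1 : ∀ z : A, c * (b * z) = b * (c * z) := fun z => by rw [← mul_assoc, sc.ev_central c hc b, mul_assoc]
  have cm3_1 : d * b = b * d := sc.ev_central d hd b
  have lc3_1 : ∀ z : A, d * (b * z) = b * (d * z) := fun z => by rw [← mul_assoc, sc.ev_central d hd b, mul_assoc]
  have cm4_1 : e * b = b * e := sc.ev_central e he b
  have lc4_1 : ∀ z : A, e * (b * z) = b * (e * z) := fun z => by rw [← mul_assoc, sc.ev_central e he b, mul_assoc]
  have cm5_1 : x * b = b * x := sc.ev_central x hx b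
  have lc5_1 : ∀ z : A, x * (b * z) = b * (x * z) := fun z => by rw [← mul_assoc, sc.ev_central x hx b, mul_assoc]
  have cm6_1 : y * b = b * y := sc.ev_central y hy b
  have lc6_1 : ∀ z : A, y * (b * z) = b * (y * z) := fun z => by rw [← mul_assoc, sc.ev_central y hy b, mul_assoc]
  have cm7_1 : α * b = b * α := (sc.ev_central b hb α).symm
  have lc7_1 : ∀ z : A, α * (b * z) = b * (α * z) := fun z => by rw [← mul_assoc, (sc.ev_central b hb α).symm, mul_assoc]
  have cm8_1 : β * b = b * β := (sc.ev_central b hb β).symm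
  have lc8_1 : ∀ z : A, β * (b * z) = b * (β * z) := fun z => by rw [← mul_assoc, (sc.ev_central b hb β).symm, mul_assoc]
  have cm9_1 : γ * b = b * γ := (sc.ev_central b hb γ).symm
  have lc9_1 : ∀ z : A, γ * (b * z) = b * (γ * z) := fun z => by rw [← mul_assoc, (sc.ev_central b hb γ).symm, mul_assoc]
  have cm10_1 : δ * b = b * δ := (sc.ev_central b hb δ).symm
  have lc10_1 : ∀ z : A, δ * (b * z) = b * (δ * z) := fun z => by rw [← mul_assoc, (sc.ev_central b hb δ).symm, mul_assoc]
  have cm11_1 : ξ * b = b * ξ := (sc.ev_central b hb ξ).symm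
  have lc11_1 : ∀ z : A, ξ * (b * z) = b * (ξ * z) := fun z => by rw [← mul_assoc, (sc.ev_central b hb ξ).symm, mul_assoc]
  have cm12_1 : η * b = b * η := (sc.ev_central b hb η).symm
  have lc12_1 : ∀ z : A, η * (b * z) = b * (η * z) := fun z => by rw [← mul_assoc, (sc.ev_central b hb η).symm, mul_assoc]
  have cm3_2 : d * c = c * d := sc.ev_central d hd c
  have lc3_2 : ∀ z : A, d * (c * z) = c * (d * z) := fun z => by rw [← mul_assoc, sc.ev_central d hd c, mul_assoc]
  have cm4_2 : e * c = c * e := sc.ev_central e he c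
  have lc4_2 : ∀ z : A, e * (c * z) = c * (e * z) := fun z => by rw [← mul_assoc, sc.ev_central e he c, mul_assoc]
  have cm5_2 : x * c = c * x := sc.ev_central x hx c
  have lc5_2 : ∀ z : A, x * (c * z) = c * (x * z) := fun z => by rw [← mul_assoc, sc.ev_central x hx c, mul_assoc]
  have cm6_2 : y * c = c * y := sc.ev_central y hy c
  have lc6_2 : ∀ z : A, y * (c * z) = c * (y * z) := fun z => by rw [← mul_assoc, sc.ev_central y hy c, mul_assoc]
  have cm7_2 : α * c = c * α := (sc.ev_central c hc α).symm
  have lc7_2 : ∀ z : A, α * (c * z) = c * (α * z) := fun z => by rw [← mul_assoc, (sc.ev_central c hc α).symm, mul_assoc]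
  have cm8_2 : β * c = c * β := (sc.ev_central c hc β).symm
  have lc8_2 : ∀ z : A, β * (c * z) = c * (β * z) := fun z => by rw [← mul_assoc, (sc.ev_central c hc β).symm, mul_assoc]
  have cm9_2 : γ * c = c * γ := (sc.ev_central c hc γ).symm
  have lc9_2 : ∀ z : A, γ * (c * z) = c * (γ * z) := fun z => by rw [← mul_assoc, (sc.ev_central c hc γ).symm, mul_assoc]
  have cm10_2 : δ * c = c * δ := (sc.ev_central c hc δ).symm
  have lc10_2 : ∀ z : A, δ * (c * z) = c * (δ * z) := fun z => by rw [← mul_assoc, (sc.ev_central c hc δ).symm, mul_assoc]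
  have cm11_2 : ξ * c = c * ξ := (sc.ev_central c hc ξ).symm
  have lc11_2 : ∀ z : A, ξ * (c * z) = c * (ξ * z) := fun z => by rw [← mul_assoc, (sc.ev_central c hc ξ).symm, mul_assoc]
  have cm12_2 : η * c = c * η := (sc.ev_central c hc η).symm
  have lc12_2 : ∀ z : A, η * (c * z) = c * (η * z) := fun z => by rw [← mul_assoc, (sc.ev_central c hc η).symm, mul_assoc]
  have cm4_3 : e * d = d * e := sc.ev_central e he d
  have lc4_3 : ∀ z : A, e * (d * z) = d * (e * z) := fun z => by rw [← mul_assoc, sc.ev_central e he d, mul_assoc]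
  have cm5_3 : x * d = d * x := sc.ev_central x hx d
  have lc5_3 : ∀ z : A, x * (d * z) = d * (x * z) := fun z => by rw [← mul_assoc, sc.ev_central x hx d, mul_assoc]
  have cm6_3 : y * d = d * y := sc.ev_central y hy d
  have lc6_3 : ∀ z : A, y * (d * z) = d * (y * z) := fun z => by rw [← mul_assoc, sc.ev_central y hy d, mul_assoc]
  have cm7_3 : α * d = d * α := (sc.ev_central d hd α).symm
  have lc7_3 : ∀ z : A, α * (d * z) = d * (α * z) := fun z => by rw [← mul_assoc, (sc.ev_central d hd α).symm, mul_assoc]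
  have cm8_3 : β * d = d * β := (sc.ev_central d hd β).symm
  have lc8_3 : ∀ z : A, β * (d * z) = d * (β * z) := fun z => by rw [← mul_assoc, (sc.ev_central d hd β).symm, mul_assoc]
  have cm9_3 : γ * d = d * γ := (sc.ev_central d hd γ).symm
  have lc9_3 : ∀ z : A, γ * (d * z) = d * (γ * z) := fun z => by rw [← mul_assoc, (sc.ev_central d hd γ).symm, mul_assoc]
  have cm10_3 : δ * d = d * δ := (sc.ev_central d hd δ).symm
  have lc10_3 : ∀ z : A, δ * (d * z) = d * (δ * z) := fun z => by rw [← mul_assoc, (sc.ev_central d hd δ).symm, mul_assoc]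
  have cm11_3 : ξ * d = d * ξ := (sc.ev_central d hd ξ).symm
  have lc11_3 : ∀ z : A, ξ * (d * z) = d * (ξ * z) := fun z => by rw [← mul_assoc, (sc.ev_central d hd ξ).symm, mul_assoc]
  have cm12_3 : η * d = d * η := (sc.ev_central d hd η).symm
  have lc12_3 : ∀ z : A, η * (d * z) = d * (η * z) := fun z => by rw [← mul_assoc, (sc.ev_central d hd η).symm, mul_assoc]
  have cm5_4 : x * e = e * x := sc.ev_central x hx e
  have lc5_4 : ∀ z : A, x * (e * z) = e * (x * z) := fun z => by rw [← mul_assoc, sc.ev_central x hx e, mul_assoc]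
  have cm6_4 : y * e = e * y := sc.ev_central y hy e
  have lc6_4 : ∀ z : A, y * (e * z) = e * (y * z) := fun z => by rw [← mul_assoc, sc.ev_central y hy e, mul_assoc]
  have cm7_4 : α * e = e * α := (sc.ev_central e he α).symm
  have lc7_4 : ∀ z : A, α * (e * z) = e * (α * z) := fun z => by rw [← mul_assoc, (sc.ev_central e he α).symm, mul_assoc]
  have cm8_4 : β * e = e * β := (sc.ev_central e he β).symm
  have lc8_4 : ∀ z : A, β * (e * z) = e * (β * z) := fun z => by rw [← mul_assoc, (sc.ev_central e he β).symm, mul_assoc]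
  have cm9_4 : γ * e = e * γ := (sc.ev_central e he γ).symm
  have lc9_4 : ∀ z : A, γ * (e * z) = e * (γ * z) := fun z => by rw [← mul_assoc, (sc.ev_central e he γ).symm, mul_assoc]
  have cm10_4 : δ * e = e * δ := (sc.ev_central e he δ).symm
  have lc10_4 : ∀ z : A, δ * (e * z) = e * (δ * z) := fun z => by rw [← mul_assoc, (sc.ev_central e he δ).symm, mul_assoc]
  have cm11_4 : ξ * e = e * ξ := (sc.ev_central e he ξ).symm
  have lc11_4 : ∀ z : A, ξ * (e * z) = e * (ξ * z) := fun z => by rw [← mul_assoc, (sc.ev_central e he ξ).symm, mul_assoc]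
  have cm12_4 : η * e = e * η := (sc.ev_central e he η).symm
  have lc12_4 : ∀ z : A, η * (e * z) = e * (η * z) := fun z => by rw [← mul_assoc, (sc.ev_central e he η).symm, mul_assoc]
  have cm6_5 : y * x = x * y := sc.ev_central y hy x
  have lc6_5 : ∀ z : A, y * (x * z) = x * (y * z) := fun z => by rw [← mul_assoc, sc.ev_central y hy x, mul_assoc]
  have cm7_5 : α * x = x * α := (sc.ev_central x hx α).symm
  have lc7_5 : ∀ z : A, α * (x * z) = x * (α * z) := fun z => by rw [← mul_assoc, (sc.ev_central x hx α).symm, mul_assoc]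
  have cm8_5 : β * x = x * β := (sc.ev_central x hx β).symm
  have lc8_5 : ∀ z : A, β * (x * z) = x * (β * z) := fun z => by rw [← mul_assoc, (sc.ev_central x hx β).symm, mul_assoc]
  have cm9_5 : γ * x = x * γ := (sc.ev_central x hx γ).symm
  have lc9_5 : ∀ z : A, γ * (x * z) = x * (γ * z) := fun z => by rw [← mul_assoc, (sc.ev_central x hx γ).symm, mul_assoc]
  have cm10_5 : δ * x = x * δ := (sc.ev_central x hx δ).symm
  have lc10_5 : ∀ z : A, δ * (x * z) = x * (δ * z) := fun z => by rw [← mul_assoc, (sc.ev_central x hx δ).symm, mul_assoc]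
  have cm11_5 : ξ * x = x * ξ := (sc.ev_central x hx ξ).symm
  have lc11_5 : ∀ z : A, ξ * (x * z) = x * (ξ * z) := fun z => by rw [← mul_assoc, (sc.ev_central x hx ξ).symm, mul_assoc]
  have cm12_5 : η * x = x * η := (sc.ev_central x hx η).symm
  have lc12_5 : ∀ z : A, η * (x * z) = x * (η * z) := fun z => by rw [← mul_assoc, (sc.ev_central x hx η).symm, mul_assoc]
  have cm7_6 : α * y = y * α := (sc.ev_central y hy α).symm
  have lc7_6 : ∀ z : A, α * (y * z) = y * (α * z) := fun z => by rw [← mul_assoc, (sc.ev_central y hy α).symm, mul_assoc]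
  have cm8_6 : β * y = y * β := (sc.ev_central y hy β).symm
  have lc8_6 : ∀ z : A, β * (y * z) = y * (β * z) := fun z => by rw [← mul_assoc, (sc.ev_central y hy β).symm, mul_assoc]
  have cm9_6 : γ * y = y * γ := (sc.ev_central y hy γ).symm
  have lc9_6 : ∀ z : A, γ * (y * z) = y * (γ * z) := fun z => by rw [← mul_assoc, (sc.ev_central y hy γ).symm, mul_assoc]
  have cm10_6 : δ * y = y * δ := (sc.ev_central y hy δ).symm
  have lc10_6 : ∀ z : A, δ * (y * z) = y * (δ * z) := fun z => by rw [← mul_assoc, (sc.ev_central y hy δ).symm, mul_assoc]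
  have cm11_6 : ξ * y = y * ξ := (sc.ev_central y hy ξ).symm
  have lc11_6 : ∀ z : A, ξ * (y * z) = y * (ξ * z) := fun z => by rw [← mul_assoc, (sc.ev_central y hy ξ).symm, mul_assoc]
  have cm12_6 : η * y = y * η := (sc.ev_central y hy η).symm
  have lc12_6 : ∀ z : A, η * (y * z) = y * (η * z) := fun z => by rw [← mul_assoc, (sc.ev_central y hy η).symm, mul_assoc]
  have cm8_7 : β * α = -(α * β) := sc.od_anticomm β α hβ hα
  have lc8_7 : ∀ z : A, β * (α * z) = -(α * (β * z)) := fun z => by rw [← mul_assoc, sc.od_anticomm β α hβ hα, neg_mul, mul_assoc]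
  have cm9_7 : γ * α = -(α * γ) := sc.od_anticomm γ α hγ hα
  have lc9_7 : ∀ z : A, γ * (α * z) = -(α * (γ * z)) := fun z => by rw [← mul_assoc, sc.od_anticomm γ α hγ hα, neg_mul, mul_assoc]
  have cm10_7 : δ * α = -(α * δ) := sc.od_anticomm δ α hδ hα
  have lc10_7 : ∀ z : A, δ * (α * z) = -(α * (δ * z)) := fun z => by rw [← mul_assoc, sc.od_anticomm δ α hδ hα, neg_mul, mul_assoc]
  have cm11_7 : ξ * α = -(α * ξ) := sc.od_anticomm ξ α hξ hα
  have lc11_7 : ∀ z : A, ξ * (α * z) = -(α * (ξ * z)) := fun z => by rw [← mul_assoc, sc.od_anticomm ξ α hξ hα, neg_mul, mul_assoc]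
  have cm12_7 : η * α = -(α * η) := sc.od_anticomm η α hη hα
  have lc12_7 : ∀ z : A, η * (α * z) = -(α * (η * z)) := fun z => by rw [← mul_assoc, sc.od_anticomm η α hη hα, neg_mul, mul_assoc]
  have cm9_8 : γ * β = -(β * γ) := sc.od_anticomm γ β hγ hβ
  have lc9_8 : ∀ z : A, γ * (β * z) = -(β * (γ * z)) := fun z => by rw [← mul_assoc, sc.od_anticomm γ β hγ hβ, neg_mul, mul_assoc]
  have cm10_8 : δ * β = -(β * δ) := sc.od_anticomm δ β hδ hβ
  have lc10_8 : ∀ z : A, δ * (β * z) = -(β * (δ * z)) := fun z => by rw [← mul_assoc, sc.od_anticomm δ β hδ hβ, neg_mul, mul_assoc]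
  have cm11_8 : ξ * β = -(β * ξ) := sc.od_anticomm ξ β hξ hβ
  have lc11_8 : ∀ z : A, ξ * (β * z) = -(β * (ξ * z)) := fun z => by rw [← mul_assoc, sc.od_anticomm ξ β hξ hβ, neg_mul, mul_assoc]
  have cm12_8 : η * β = -(β * η) := sc.od_anticomm η β hη hβ
  have lc12_8 : ∀ z : A, η * (β * z) = -(β * (η * z)) := fun z => by rw [← mul_assoc, sc.od_anticomm η β hη hβ, neg_mul, mul_assoc]
  have cm10_9 : δ * γ = -(γ * δ) := sc.od_anticomm δ γ hδ hγ
  have lc10_9 : ∀ z : A, δ * (γ * z) = -(γ * (δ * z)) := fun z => by rw [← mul_assoc, sc.od_anticomm δ γ hδ hγ, neg_mul, mul_assoc]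
  have cm11_9 : ξ * γ = -(γ * ξ) := sc.od_anticomm ξ γ hξ hγ
  have lc11_9 : ∀ z : A, ξ * (γ * z) = -(γ * (ξ * z)) := fun z => by rw [← mul_assoc, sc.od_anticomm ξ γ hξ hγ, neg_mul, mul_assoc]
  have cm12_9 : η * γ = -(γ * η) := sc.od_anticomm η γ hη hγ
  have lc12_9 : ∀ z : A, η * (γ * z) = -(γ * (η * z)) := fun z => by rw [← mul_assoc, sc.od_anticomm η γ hη hγ, neg_mul, mul_assoc]
  have cm11_10 : ξ * δ = -(δ * ξ) := sc.od_anticomm ξ δ hξ hδ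
  have lc11_10 : ∀ z : A, ξ * (δ * z) = -(δ * (ξ * z)) := fun z => by rw [← mul_assoc, sc.od_anticomm ξ δ hξ hδ, neg_mul, mul_assoc]
  have cm12_10 : η * δ = -(δ * η) := sc.od_anticomm η δ hη hδ
  have lc12_10 : ∀ z : A, η * (δ * z) = -(δ * (η * z)) := fun z => by rw [← mul_assoc, sc.od_anticomm η δ hη hδ, neg_mul, mul_assoc]
  have cm12_11 : η * ξ = -(ξ * η) := sc.od_anticomm η ξ hη hξ
  have lc12_11 : ∀ z : A, η * (ξ * z) = -(ξ * (η * z)) := fun z => by rw [← mul_assoc, sc.od_anticomm η ξ hη hξ, neg_mul, mul_assoc]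
  have sq0 : α * α = 0 := sc.od_sq α hα
  have sql0 : ∀ z : A, α * (α * z) = 0 := fun z => by rw [← mul_assoc, sc.od_sq α hα, zero_mul]
  have sq1 : β * β = 0 := sc.od_sq β hβ
  have sql1 : ∀ z : A, β * (β * z) = 0 := fun z => by rw [← mul_assoc, sc.od_sq β hβ, zero_mul]
  have sq2 : γ * γ = 0 := sc.od_sq γ hγ
  have sql2 : ∀ z : A, γ * (γ * z) = 0 := fun z => by rw [← mul_assoc, sc.od_sq γ hγ, zero_mul]
  have sq3 : δ * δ = 0 := sc.od_sq δ hδ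
  have sql3 : ∀ z : A, δ * (δ * z) = 0 := fun z => by rw [← mul_assoc, sc.od_sq δ hδ, zero_mul]
  have sq4 : ξ * ξ = 0 := sc.od_sq ξ hξ
  have sql4 : ∀ z : A, ξ * (ξ * z) = 0 := fun z => by rw [← mul_assoc, sc.od_sq ξ hξ, zero_mul]
  have sq5 : η * η = 0 := sc.od_sq η hη
  have sql5 : ∀ z : A, η * (η * z) = 0 := fun z => by rw [← mul_assoc, sc.od_sq η hη, zero_mul]
  simp only [mul_add, add_mul, mul_sub, sub_mul, neg_mul, mul_neg, neg_neg, mul_assoc, two_mul, mul_zero, zero_mul, add_zero, zero_add, mul_one, one_mul, sub_zero, cm1_0, lc1_0, cm2_0, lc2_0, cm3_0, lc3_0, cm4_0, lc4_0, cm5_0, lc5_0, cm6_0, lc6_0, cm7_0, lc7_0, cm8_0, lc8_0, cm9_0, lc9_0, cm10_0, lc10_0, cm11_0, lc11_0, cm12_0, lc12_0, cm2_1, lc2_1, cm3_1, lc3_1, cm4_1, lc4_1, cm5_1, lc5_1, cm6_1, lc6_1, cm7_1, lc7_1, cm8_1, lc8_1, cm9_1, lc9_1, cm10_1, lc10_1,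 cm11_1, lc11_1, cm12_1, lc12_1, cm3_2, lc3_2, cm4_2, lc4_2, cm5_2, lc5_2, cm6_2, lc6_2, cm7_2, lc7_2, cm8_2, lc8_2, cm9_2, lc9_2, cm10_2, lc10_2, cm11_2, lc11_2, cm12_2, lc12_2, cm4_3, lc4_3, cm5_3, lc5_3, cm6_3, lc6_3, cm7_3, lc7_3, cm8_3, lc8_3, cm9_3, lc9_3, cm10_3, lc10_3, cm11_3, lc11_3, cm12_3, lc12_3, cm5_4, lc5_4, cm6_4, lc6_4, cm7_4, lc7_4, cm8_4, lc8_4, cm9_4, lc9_4, cm10_4, lc10_4, cm11_4, lc11_4, cm12_4, lc12_4, cm6_5, lc6_5, cm7_5, lc7_5, cm8_5, lc8_5, cm9_5, lc9_5, cm10_5, lc10_5, cm11_5, lc11_5, cm12_5, lc12_5, cm7_6, lc7_6, cm8_6, lc8_6, cm9_6, lc9_6, cm10_6, lc10_6, cm11_6, lc11_6, cm12_6, lc12_6, cm8_7, lc8_7, cm9_7, lc9_7, cm10_7, lc10_7, cm11_7, lc11_7, cm12_7, lc12_7, cm9_8, lc9_8, cm10_8, lc10_8, cm11_8, lc11_8,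 cm12_8, lc12_8, cm10_9, lc10_9, cm11_9, lc11_9, cm12_9, lc12_9, cm11_10, lc11_10, cm12_10, lc12_10, cm12_11, lc12_11, sq0, sql0, sq1, sql1, sq2, sql2, sq3, sql3, sq4, sql4, sq5, sql5]
  abel
theorem key2 {A : Type*} [Ring A] (sc : SuperComm A)
    (a b c d e x y α β γ δ ξ η : A)
    (ha : sc.Ev a) (hb : sc.Ev b) (hc : sc.Ev c) (hd : sc.Ev d) (he : sc.Ev e)
    (hx : sc.Ev x) (hy : sc.Ev y)
    (hα : sc.Od α) (hβ : sc.Od β) (hγ : sc.Od γ) (hδ : sc.Od δ)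
    (hξ : sc.Od ξ) (hη : sc.Od η)
    (rel₁ : a * d - b * c - α * β = 1)
    (rel₂ : e * e + 2 * (γ * δ) = 1)
    (rel₃ : α * e - a * δ + c * γ = 0)
    (rel₄ : β * e - b * δ + d * γ = 0) :
    (a*y + b + γ*η) * (c*x + d + δ*ξ) - (a*x + b + γ*ξ) * (c*y + d + δ*η)
      - (α*y + β + e*η) * (α*x + β + e*ξ)
    = y - x - η*ξ := by
  have h3' : a*δ - e*α - c*γ = 0 := by
    have hce : e * α = α * e := sc.ev_central e he α
    calc a*δ - e*α - c*γ = -(α*e - a*δ + c*γ) := by rw [hce]; abel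
      _ = 0 := by rw [rel₃, neg_zero]
  have h4' : b*δ - e*β - d*γ = 0 := by
    have hce : e * β = β * e := sc.ev_central e he β
    calc b*δ - e*β - d*γ = -(β*e - b*δ + d*γ) := by rw [hce]; abel
      _ = 0 := by rw [rel₄, neg_zero]
  rw [key sc a b c d e x y α β γ δ ξ η ha hb hc hd he hx hy hα hβ hγ hδ hξ hη,
    rel₁, h3', h4', rel₂]
  simp only [one_mul, zero_mul]
  abel

theorem inv_central {A : Type*} [Ring A] {D Di : A}
    (hD : ∀ z, D * z = z * D) (h1 : D * Di = 1) (h2 : Di * D = 1) :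
    ∀ z, Di * z = z * Di := by
  intro z
  calc Di * z = Di * z * (D * Di) := by rw [h1, mul_one]
    _ = Di * (z * D) * Di := by rw [← mul_assoc (Di * z) D Di, mul_assoc Di z D]
    _ = Di * (D * z) * Di := by rw [hD z]
    _ = (Di * D) * (z * Di) := by
        rw [← mul_assoc Di D z, mul_assoc (Di * D) z Di]
    _ = z * Di := by rw [h2, one_mul]

theorem aux_div {A : Type*} [Ring A] (P Q R S Di Dj Di' Dj' E : A)
    (hDi'C : ∀ z, Di' * z = z * Di') (hDj'C : ∀ z, Dj' * z = z * Dj')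
    (hDi1 : Di * Di' = 1) (hDj1 : Dj * Dj' = 1)
    (hkey : Q * Di - P * Dj - S * R = E) :
    Q * Dj' - P * Di' - (S * Dj') * (R * Di') = E * (Di' * Dj') := by
  rw [← hkey, sub_mul, sub_mul]
  have e1 : Q * Di * (Di' * Dj') = Q * Dj' := by
    rw [mul_assoc, ← mul_assoc Di Di' Dj', hDi1, one_mul]
  have e2 : P * Dj * (Di' * Dj') = P * Di' := by
    rw [mul_assoc, ← mul_assoc Dj Di' Dj', ← hDi'C Dj, mul_assoc Di' Dj Dj',
      hDj1, mul_one]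
  have e3 : S * R * (Di' * Dj') = (S * Dj') * (R * Di') := by
    rw [hDi'C Dj', mul_assoc, ← mul_assoc R Dj' Di', ← hDj'C R,
      mul_assoc Dj' R Di', ← mul_assoc S Dj' (R * Di')]
  rw [e1, e2, e3]

theorem ebr_hmap {A : Type*} [Ring A] (sc : SuperComm A)
    (a b c d e α β γ δ : A)
    (ha : sc.Ev a) (hb : sc.Ev b) (hc : sc.Ev c) (hd : sc.Ev d) (he : sc.Ev e)
    (hα : sc.Od α) (hβ : sc.Od β) (hγ : sc.Od γ) (hδ : sc.Od δ)
    (rel₁ : a * d - b * c - α * β = 1)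
    (rel₂ : e * e + 2 * (γ * δ) = 1)
    (rel₃ : α * e - a * δ + c * γ = 0)
    (rel₄ : β * e - b * δ + d * γ = 0)
    (ti tj : A × A)
    (hxi : sc.Ev ti.1) (hξi : sc.Od ti.2)
    (hxj : sc.Ev tj.1) (hξj : sc.Od tj.2)
    (Diinv Djinv : A)
    (hDi : (c * ti.1 + d + δ * ti.2) * Diinv = 1
         ∧ Diinv * (c * ti.1 + d + δ * ti.2) = 1)
    (hDj : (c * tj.1 + d + δ * tj.2) * Djinv = 1
         ∧ Djinv * (c * tj.1 + d + δ * tj.2) = 1) :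
    ebr (hmap a b e α β γ Diinv ti) (hmap a b e α β γ Djinv tj)
      = ebr ti tj * (Diinv * Djinv) := by
  obtain ⟨hDi1, hDi2⟩ := hDi
  obtain ⟨hDj1, hDj2⟩ := hDj
  have hDiEv : sc.Ev (c * ti.1 + d + δ * ti.2) :=
    sc.ev_add _ _ (sc.ev_add _ _ (sc.ev_mul_ev c ti.1 hc hxi) hd)
      (sc.od_mul_od δ ti.2 hδ hξi)
  have hDjEv : sc.Ev (c * tj.1 + d + δ * tj.2) :=
    sc.ev_add _ _ (sc.ev_add _ _ (sc.ev_mul_ev c tj.1 hc hxj) hd)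
      (sc.od_mul_od δ tj.2 hδ hξj)
  have hDi'C : ∀ z, Diinv * z = z * Diinv :=
    inv_central (sc.ev_central _ hDiEv) hDi1 hDi2
  have hDj'C : ∀ z, Djinv * z = z * Djinv :=
    inv_central (sc.ev_central _ hDjEv) hDj1 hDj2
  have hkey := key2 sc a b c d e ti.1 tj.1 α β γ δ ti.2 tj.2
    ha hb hc hd he hxi hxj hα hβ hγ hδ hξi hξj rel₁ rel₂ rel₃ rel₄
  show (a * tj.1 + b + γ * tj.2) * Djinv - (a * ti.1 + b + γ * ti.2) * Diinv
      - ((α * tj.1 + β + e * tj.2) * Djinv) * ((α * ti.1 + β + e * ti.2) * Diinv)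
    = (tj.1 - ti.1 - tj.2 * ti.2) * (Diinv * Djinv)
  exact aux_div _ _ _ _ _ _ _ _ _ hDi'C hDj'C hDi1 hDj1 hkey

/-- the even super cross-ratio is invariant under orthosymplectic
homographies, in denominator-free form:
`[ĥ(t₁),ĥ(t₃)]·[ĥ(t₂),ĥ(t₄)]·[t₂,t₃]·[t₁,t₄] = [ĥ(t₂),ĥ(t₃)]·[ĥ(t₁),ĥ(t₄)]·[t₁,t₃]·[t₂,t₄]`. -/
theorem spo_homography_cross_ratio_invariance
    {A : Type*} [Ring A] (sc : SuperComm A)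
    (a b c d e α β γ δ : A)
    (ha : sc.Ev a) (hb : sc.Ev b) (hc : sc.Ev c) (hd : sc.Ev d) (he : sc.Ev e)
    (hα : sc.Od α) (hβ : sc.Od β) (hγ : sc.Od γ) (hδ : sc.Od δ)
    (rel₁ : a * d - b * c - α * β = 1)
    (rel₂ : e * e + 2 * (γ * δ) = 1)
    (rel₃ : α * e - a * δ + c * γ = 0)
    (rel₄ : β * e - b * δ + d * γ = 0)
    (t₁ t₂ t₃ t₄ : A × A)
    (hx₁ : sc.Ev t₁.1) (hξ₁ : sc.Od t₁.2)
    (hx₂ : sc.Ev t₂.1) (hξ₂ : sc.Od t₂.2)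
    (hx₃ : sc.Ev t₃.1) (hξ₃ : sc.Od t₃.2)
    (hx₄ : sc.Ev t₄.1) (hξ₄ : sc.Od t₄.2)
    (D₁inv D₂inv D₃inv D₄inv : A)
    (hD₁ : (c * t₁.1 + d + δ * t₁.2) * D₁inv = 1
         ∧ D₁inv * (c * t₁.1 + d + δ * t₁.2) = 1)
    (hD₂ : (c * t₂.1 + d + δ * t₂.2) * D₂inv = 1
         ∧ D₂inv * (c * t₂.1 + d + δ * t₂.2) = 1)
    (hD₃ : (c * t₃.1 + d + δ * t₃.2) * D₃inv = 1
         ∧ D₃inv * (c * t₃.1 + d + δ * t₃.2) = 1)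
    (hD₄ : (c * t₄.1 + d + δ * t₄.2) * D₄inv = 1
         ∧ D₄inv * (c * t₄.1 + d + δ * t₄.2) = 1) :
    ebr (hmap a b e α β γ D₁inv t₁) (hmap a b e α β γ D₃inv t₃)
      * ebr (hmap a b e α β γ D₂inv t₂) (hmap a b e α β γ D₄inv t₄)
      * ebr t₂ t₃ * ebr t₁ t₄
    = ebr (hmap a b e α β γ D₂inv t₂) (hmap a b e α β γ D₃inv t₃)
      * ebr (hmap a b e α β γ D₁inv t₁) (hmap a b e α β γ D₄inv t₄)
      * ebr t₁ t₃ * ebr t₂ t₄ := by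
  rw [ebr_hmap sc a b c d e α β γ δ ha hb hc hd he hα hβ hγ hδ rel₁ rel₂ rel₃ rel₄
        t₁ t₃ hx₁ hξ₁ hx₃ hξ₃ D₁inv D₃inv hD₁ hD₃,
      ebr_hmap sc a b c d e α β γ δ ha hb hc hd he hα hβ hγ hδ rel₁ rel₂ rel₃ rel₄
        t₂ t₄ hx₂ hξ₂ hx₄ hξ₄ D₂inv D₄inv hD₂ hD₄,
      ebr_hmap sc a b c d e α β γ δ ha hb hc hd he hα hβ hγ hδ rel₁ rel₂ rel₃ rel₄
        t₂ t₃ hx₂ hξ₂ hx₃ hξ₃ D₂inv D₃inv hD₂ hD₃,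
      ebr_hmap sc a b c d e α β γ δ ha hb hc hd he hα hβ hγ hδ rel₁ rel₂ rel₃ rel₄
        t₁ t₄ hx₁ hξ₁ hx₄ hξ₄ D₁inv D₄inv hD₁ hD₄]
  have evsub : ∀ u v : A, sc.Ev u → sc.Ev v → sc.Ev (u - v) := fun u v hu hv => by
    rw [sub_eq_add_neg]; exact sc.ev_add _ _ hu (sc.ev_neg _ hv)
  have hEbrEv : ∀ (ti tj : A × A), sc.Ev ti.1 → sc.Od ti.2 → sc.Ev tj.1 →
      sc.Od tj.2 → sc.Ev (ebr ti tj) := fun ti tj h1 h2 h3 h4 =>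
    evsub _ _ (evsub _ _ h3 h1) (sc.od_mul_od _ _ h4 h2)
  have hDinvC : ∀ (t : A × A) (Di : A), sc.Ev t.1 → sc.Od t.2 →
      ((c * t.1 + d + δ * t.2) * Di = 1 ∧ Di * (c * t.1 + d + δ * t.2) = 1) →
      ∀ z, Di * z = z * Di := by
    intro t Di ht1 ht2 hDt
    exact inv_central
      (sc.ev_central _ (sc.ev_add _ _ (sc.ev_add _ _ (sc.ev_mul_ev c t.1 hc ht1) hd)
        (sc.od_mul_od δ t.2 hδ ht2))) hDt.1 hDt.2
  have hC0 : ∀ z, ebr t₁ t₃ * z = z * ebr t₁ t₃ :=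
    sc.ev_central _ (hEbrEv t₁ t₃ hx₁ hξ₁ hx₃ hξ₃)
  have hC1 : ∀ z, ebr t₁ t₄ * z = z * ebr t₁ t₄ :=
    sc.ev_central _ (hEbrEv t₁ t₄ hx₁ hξ₁ hx₄ hξ₄)
  have hC2 : ∀ z, ebr t₂ t₃ * z = z * ebr t₂ t₃ :=
    sc.ev_central _ (hEbrEv t₂ t₃ hx₂ hξ₂ hx₃ hξ₃)
  have hC3 : ∀ z, ebr t₂ t₄ * z = z * ebr t₂ t₄ :=
    sc.ev_central _ (hEbrEv t₂ t₄ hx₂ hξ₂ hx₄ hξ₄)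
  have hC4 : ∀ z, D₁inv * z = z * D₁inv := hDinvC t₁ D₁inv hx₁ hξ₁ hD₁
  have hC5 : ∀ z, D₂inv * z = z * D₂inv := hDinvC t₂ D₂inv hx₂ hξ₂ hD₂
  have hC6 : ∀ z, D₃inv * z = z * D₃inv := hDinvC t₃ D₃inv hx₃ hξ₃ hD₃
  have hC7 : ∀ z, D₄inv * z = z * D₄inv := hDinvC t₄ D₄inv hx₄ hξ₄ hD₄
  have fcm1_0 : (ebr t₁ t₄) * (ebr t₁ t₃) = (ebr t₁ t₃) * (ebr t₁ t₄) := hC1 (ebr t₁ t₃)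
  have flc1_0 : ∀ z : A, (ebr t₁ t₄) * ((ebr t₁ t₃) * z) = (ebr t₁ t₃) * ((ebr t₁ t₄) * z) := fun z => by rw [← mul_assoc, hC1 (ebr t₁ t₃), mul_assoc]
  have fcm2_0 : (ebr t₂ t₃) * (ebr t₁ t₃) = (ebr t₁ t₃) * (ebr t₂ t₃) := hC2 (ebr t₁ t₃)
  have flc2_0 : ∀ z : A, (ebr t₂ t₃) * ((ebr t₁ t₃) * z) = (ebr t₁ t₃) * ((ebr t₂ t₃) * z) := fun z => by rw [← mul_assoc, hC2 (ebr t₁ t₃), mul_assoc]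
  have fcm3_0 : (ebr t₂ t₄) * (ebr t₁ t₃) = (ebr t₁ t₃) * (ebr t₂ t₄) := hC3 (ebr t₁ t₃)
  have flc3_0 : ∀ z : A, (ebr t₂ t₄) * ((ebr t₁ t₃) * z) = (ebr t₁ t₃) * ((ebr t₂ t₄) * z) := fun z => by rw [← mul_assoc, hC3 (ebr t₁ t₃), mul_assoc]
  have fcm4_0 : (D₁inv) * (ebr t₁ t₃) = (ebr t₁ t₃) * (D₁inv) := hC4 (ebr t₁ t₃)
  have flc4_0 : ∀ z : A, (D₁inv) * ((ebr t₁ t₃) * z) = (ebr t₁ t₃) * ((D₁inv) * z) := fun z => by rw [← mul_assoc, hC4 (ebr t₁ t₃), mul_assoc]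
  have fcm5_0 : (D₂inv) * (ebr t₁ t₃) = (ebr t₁ t₃) * (D₂inv) := hC5 (ebr t₁ t₃)
  have flc5_0 : ∀ z : A, (D₂inv) * ((ebr t₁ t₃) * z) = (ebr t₁ t₃) * ((D₂inv) * z) := fun z => by rw [← mul_assoc, hC5 (ebr t₁ t₃), mul_assoc]
  have fcm6_0 : (D₃inv) * (ebr t₁ t₃) = (ebr t₁ t₃) * (D₃inv) := hC6 (ebr t₁ t₃)
  have flc6_0 : ∀ z : A, (D₃inv) * ((ebr t₁ t₃) * z) = (ebr t₁ t₃) * ((D₃inv) * z) := fun z => by rw [← mul_assoc, hC6 (ebr t₁ t₃), mul_assoc]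
  have fcm7_0 : (D₄inv) * (ebr t₁ t₃) = (ebr t₁ t₃) * (D₄inv) := hC7 (ebr t₁ t₃)
  have flc7_0 : ∀ z : A, (D₄inv) * ((ebr t₁ t₃) * z) = (ebr t₁ t₃) * ((D₄inv) * z) := fun z => by rw [← mul_assoc, hC7 (ebr t₁ t₃), mul_assoc]
  have fcm2_1 : (ebr t₂ t₃) * (ebr t₁ t₄) = (ebr t₁ t₄) * (ebr t₂ t₃) := hC2 (ebr t₁ t₄)
  have flc2_1 : ∀ z : A, (ebr t₂ t₃) * ((ebr t₁ t₄) * z) = (ebr t₁ t₄) * ((ebr t₂ t₃) * z) := fun z => by rw [← mul_assoc, hC2 (ebr t₁ t₄), mul_assoc]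
  have fcm3_1 : (ebr t₂ t₄) * (ebr t₁ t₄) = (ebr t₁ t₄) * (ebr t₂ t₄) := hC3 (ebr t₁ t₄)
  have flc3_1 : ∀ z : A, (ebr t₂ t₄) * ((ebr t₁ t₄) * z) = (ebr t₁ t₄) * ((ebr t₂ t₄) * z) := fun z => by rw [← mul_assoc, hC3 (ebr t₁ t₄), mul_assoc]
  have fcm4_1 : (D₁inv) * (ebr t₁ t₄) = (ebr t₁ t₄) * (D₁inv) := hC4 (ebr t₁ t₄)
  have flc4_1 : ∀ z : A, (D₁inv) * ((ebr t₁ t₄) * z) = (ebr t₁ t₄) * ((D₁inv) * z) := fun z => by rw [← mul_assoc, hC4 (ebr t₁ t₄), mul_assoc]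
  have fcm5_1 : (D₂inv) * (ebr t₁ t₄) = (ebr t₁ t₄) * (D₂inv) := hC5 (ebr t₁ t₄)
  have flc5_1 : ∀ z : A, (D₂inv) * ((ebr t₁ t₄) * z) = (ebr t₁ t₄) * ((D₂inv) * z) := fun z => by rw [← mul_assoc, hC5 (ebr t₁ t₄), mul_assoc]
  have fcm6_1 : (D₃inv) * (ebr t₁ t₄) = (ebr t₁ t₄) * (D₃inv) := hC6 (ebr t₁ t₄)
  have flc6_1 : ∀ z : A, (D₃inv) * ((ebr t₁ t₄) * z) = (ebr t₁ t₄) * ((D₃inv) * z) := fun z => by rw [← mul_assoc, hC6 (ebr t₁ t₄), mul_assoc]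
  have fcm7_1 : (D₄inv) * (ebr t₁ t₄) = (ebr t₁ t₄) * (D₄inv) := hC7 (ebr t₁ t₄)
  have flc7_1 : ∀ z : A, (D₄inv) * ((ebr t₁ t₄) * z) = (ebr t₁ t₄) * ((D₄inv) * z) := fun z => by rw [← mul_assoc, hC7 (ebr t₁ t₄), mul_assoc]
  have fcm3_2 : (ebr t₂ t₄) * (ebr t₂ t₃) = (ebr t₂ t₃) * (ebr t₂ t₄) := hC3 (ebr t₂ t₃)
  have flc3_2 : ∀ z : A, (ebr t₂ t₄) * ((ebr t₂ t₃) * z) = (ebr t₂ t₃) * ((ebr t₂ t₄) * z) := fun z => by rw [← mul_assoc, hC3 (ebr t₂ t₃), mul_assoc]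
  have fcm4_2 : (D₁inv) * (ebr t₂ t₃) = (ebr t₂ t₃) * (D₁inv) := hC4 (ebr t₂ t₃)
  have flc4_2 : ∀ z : A, (D₁inv) * ((ebr t₂ t₃) * z) = (ebr t₂ t₃) * ((D₁inv) * z) := fun z => by rw [← mul_assoc, hC4 (ebr t₂ t₃), mul_assoc]
  have fcm5_2 : (D₂inv) * (ebr t₂ t₃) = (ebr t₂ t₃) * (D₂inv) := hC5 (ebr t₂ t₃)
  have flc5_2 : ∀ z : A, (D₂inv) * ((ebr t₂ t₃) * z) = (ebr t₂ t₃) * ((D₂inv) * z) := fun z => by rw [← mul_assoc, hC5 (ebr t₂ t₃), mul_assoc]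
  have fcm6_2 : (D₃inv) * (ebr t₂ t₃) = (ebr t₂ t₃) * (D₃inv) := hC6 (ebr t₂ t₃)
  have flc6_2 : ∀ z : A, (D₃inv) * ((ebr t₂ t₃) * z) = (ebr t₂ t₃) * ((D₃inv) * z) := fun z => by rw [← mul_assoc, hC6 (ebr t₂ t₃), mul_assoc]
  have fcm7_2 : (D₄inv) * (ebr t₂ t₃) = (ebr t₂ t₃) * (D₄inv) := hC7 (ebr t₂ t₃)
  have flc7_2 : ∀ z : A, (D₄inv) * ((ebr t₂ t₃) * z) = (ebr t₂ t₃) * ((D₄inv) * z) := fun z => by rw [← mul_assoc, hC7 (ebr t₂ t₃), mul_assoc]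
  have fcm4_3 : (D₁inv) * (ebr t₂ t₄) = (ebr t₂ t₄) * (D₁inv) := hC4 (ebr t₂ t₄)
  have flc4_3 : ∀ z : A, (D₁inv) * ((ebr t₂ t₄) * z) = (ebr t₂ t₄) * ((D₁inv) * z) := fun z => by rw [← mul_assoc, hC4 (ebr t₂ t₄), mul_assoc]
  have fcm5_3 : (D₂inv) * (ebr t₂ t₄) = (ebr t₂ t₄) * (D₂inv) := hC5 (ebr t₂ t₄)
  have flc5_3 : ∀ z : A, (D₂inv) * ((ebr t₂ t₄) * z) = (ebr t₂ t₄) * ((D₂inv) * z) := fun z => by rw [← mul_assoc, hC5 (ebr t₂ t₄), mul_assoc]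
  have fcm6_3 : (D₃inv) * (ebr t₂ t₄) = (ebr t₂ t₄) * (D₃inv) := hC6 (ebr t₂ t₄)
  have flc6_3 : ∀ z : A, (D₃inv) * ((ebr t₂ t₄) * z) = (ebr t₂ t₄) * ((D₃inv) * z) := fun z => by rw [← mul_assoc, hC6 (ebr t₂ t₄), mul_assoc]
  have fcm7_3 : (D₄inv) * (ebr t₂ t₄) = (ebr t₂ t₄) * (D₄inv) := hC7 (ebr t₂ t₄)
  have flc7_3 : ∀ z : A, (D₄inv) * ((ebr t₂ t₄) * z) = (ebr t₂ t₄) * ((D₄inv) * z) := fun z => by rw [← mul_assoc, hC7 (ebr t₂ t₄), mul_assoc]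
  have fcm5_4 : (D₂inv) * (D₁inv) = (D₁inv) * (D₂inv) := hC5 (D₁inv)
  have flc5_4 : ∀ z : A, (D₂inv) * ((D₁inv) * z) = (D₁inv) * ((D₂inv) * z) := fun z => by rw [← mul_assoc, hC5 (D₁inv), mul_assoc]
  have fcm6_4 : (D₃inv) * (D₁inv) = (D₁inv) * (D₃inv) := hC6 (D₁inv)
  have flc6_4 : ∀ z : A, (D₃inv) * ((D₁inv) * z) = (D₁inv) * ((D₃inv) * z) := fun z => by rw [← mul_assoc, hC6 (D₁inv), mul_assoc]
  have fcm7_4 : (D₄inv) * (D₁inv) = (D₁inv) * (D₄inv) := hC7 (D₁inv)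
  have flc7_4 : ∀ z : A, (D₄inv) * ((D₁inv) * z) = (D₁inv) * ((D₄inv) * z) := fun z => by rw [← mul_assoc, hC7 (D₁inv), mul_assoc]
  have fcm6_5 : (D₃inv) * (D₂inv) = (D₂inv) * (D₃inv) := hC6 (D₂inv)
  have flc6_5 : ∀ z : A, (D₃inv) * ((D₂inv) * z) = (D₂inv) * ((D₃inv) * z) := fun z => by rw [← mul_assoc, hC6 (D₂inv), mul_assoc]
  have fcm7_5 : (D₄inv) * (D₂inv) = (D₂inv) * (D₄inv) := hC7 (D₂inv)
  have flc7_5 : ∀ z : A, (D₄inv) * ((D₂inv) * z) = (D₂inv) * ((D₄inv) * z) := fun z => by rw [← mul_assoc, hC7 (D₂inv), mul_assoc]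
  have fcm7_6 : (D₄inv) * (D₃inv) = (D₃inv) * (D₄inv) := hC7 (D₃inv)
  have flc7_6 : ∀ z : A, (D₄inv) * ((D₃inv) * z) = (D₃inv) * ((D₄inv) * z) := fun z => by rw [← mul_assoc, hC7 (D₃inv), mul_assoc]
  simp only [mul_assoc, fcm1_0, flc1_0, fcm2_0, flc2_0, fcm3_0, flc3_0, fcm4_0, flc4_0, fcm5_0, flc5_0, fcm6_0, flc6_0, fcm7_0, flc7_0, fcm2_1, flc2_1, fcm3_1, flc3_1, fcm4_1, flc4_1, fcm5_1, flc5_1, fcm6_1, flc6_1, fcm7_1, flc7_1, fcm3_2, flc3_2, fcm4_2, flc4_2, fcm5_2, flc5_2, fcm6_2, flc6_2, fcm7_2, flc7_2, fcm4_3, flc4_3, fcm5_3, flc5_3, fcm6_3, flc6_3, fcm7_3, flc7_3, fcm5_4, flc5_4, fcm6_4, flc6_4, fcm7_4, flc7_4, fcm6_5, flc6_5, fcm7_5, flc7_5, fcm7_6, flc7_6]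
end
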